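/- Let f be UPP with parameters (T_f, d_f, c_f) and g be ultimately affine with slope ρ_g > 0: g(t) = g(T) + ρ_g·(t − T) for all t ≥ T, where T := max{g↓(T_f), T_g^a}. Then h = f ∘ g satisfies h(t + k·(d_f/ρ_g)) = h(t) + k·c_f for all t ≥ T and k ∈ ℕ; i.e., h is UPP with period d_f/ρ_g and height c_f. -/
import Mathlib


/-- Lower pseudo-inverse of g : ℚ≥0 → ℚ, as a real number:
g↓(y) = inf { x ≥ 0 | g(x) ≥ y }. -/
noncomputable def lpiQ (g : ℚ → ℚ) (y : ℚ) : ℝ :=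
  sInf {x : ℝ | ∃ q : ℚ, x = (q : ℝ) ∧ 0 ≤ q ∧ y ≤ g q}

/-- if f is UPP with parameters (T_f, d_f, c_f) and g is
non-decreasing ultimately affine with slope ρ_g > 0, then h = f ∘ g is UPP with
period d_f/ρ_g and height c_f from T = max{g↓(T_f), T_g^a}. -/
theorem comp_upp_g_ua (f g : ℚ → ℚ) (Tf df cf Tga ρg : ℚ)
    (hTf : 0 ≤ Tf) (hTga : 0 ≤ Tga) (hdf : 0 < df) (hρg : 0 < ρg)
    (hgnn : ∀ t : ℚ, 0 ≤ t → 0 ≤ g t)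
    (hgmono : ∀ x y : ℚ, 0 ≤ x → x ≤ y → g x ≤ g y)
    (hf : ∀ x : ℚ, Tf ≤ x → ∀ k : ℕ, f (x + (k : ℚ) * df) = f x + (k : ℚ) * cf)
    (hg : ∀ t : ℚ, Tga ≤ t → g t = g Tga + ρg * (t - Tga)) :
    ∀ t : ℚ, max (lpiQ g Tf) ((Tga : ℝ)) ≤ (t : ℝ) → ∀ k : ℕ,
      f (g (t + (k : ℚ) * (df / ρg))) = f (g t) + (k : ℚ) * cf := by
  intro t ht k
  have hTgat : Tga ≤ t := by exact_mod_cast le_trans (le_max_right _ _) ht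
  have hlpi : lpiQ g Tf ≤ (t : ℝ) := le_trans (le_max_left _ _) ht
  have ht0 : 0 ≤ t := le_trans hTga hTgat
  have hSne : Set.Nonempty {x : ℝ | ∃ q : ℚ, x = (q : ℝ) ∧ 0 ≤ q ∧ Tf ≤ g q} := by
    refine ⟨((Tga + max 0 ((Tf - g Tga) / ρg) : ℚ) : ℝ), _, rfl, ?_, ?_⟩
    · have := le_max_left 0 ((Tf - g Tga) / ρg)
      linarith
    · have hq : Tga ≤ Tga + max 0 ((Tf - g Tga) / ρg) := by
        have := le_max_left 0 ((Tf - g Tga) / ρg)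
        linarith
      rw [hg _ hq]
      rcases le_or_gt (Tf - g Tga) 0 with h | h
      · have := hgnn Tga hTga
        have hm := le_max_left 0 ((Tf - g Tga) / ρg)
        nlinarith
      · have hmx : max 0 ((Tf - g Tga) / ρg) = (Tf - g Tga) / ρg :=
          max_eq_right (le_of_lt (div_pos h hρg))
        rw [hmx]
        have : ρg * ((Tf - g Tga) / ρg) = Tf - g Tga := by
          field_simp
        have h2 : Tga + (Tf - g Tga) / ρg - Tga = (Tf - g Tga) / ρg := by ring
        rw [h2, this]
        linarith
  have hTfgt : Tf ≤ g t := by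
    by_contra hlt
    push_neg at hlt
    set ε : ℚ := (Tf - g t) / ρg with hεdef
    have hε : 0 < ε := div_pos (by linarith) hρg
    have hlt2 : lpiQ g Tf < (t : ℝ) + (ε : ℝ) := by
      have : (0 : ℝ) < (ε : ℝ) := by exact_mod_cast hε
      linarith
    obtain ⟨x, hxS, hxlt⟩ := exists_lt_of_csInf_lt hSne hlt2
    obtain ⟨q, rfl, hq0, hqTf⟩ := hxS
    have hqlt : q < t + ε := by exact_mod_cast hxlt
    rcases le_or_gt q t with h | h
    · have := hgmono q t hq0 h
      linarith
    · have hgq := hg q (le_trans hTgat h.le)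
      have hgt := hg t hTgat
      have heq : g q = g t + ρg * (q - t) := by rw [hgq, hgt]; ring
      have hqe : ρg * (q - t) < ρg * ε := by
        apply mul_lt_mul_of_pos_left _ hρg
        linarith
      have hρε : ρg * ε = Tf - g t := by
        rw [hεdef]; field_simp
      linarith [heq ▸ hqTf]
  have hg1 := hg t hTgat
  have hk : Tga ≤ t + (k : ℚ) * (df / ρg) := by
    have : (0 : ℚ) ≤ (k : ℚ) * (df / ρg) := by positivity
    linarith
  have hg2 := hg (t + (k : ℚ) * (df / ρg)) hk
  have hgeq : g (t + (k : ℚ) * (df / ρg)) = g t + (k : ℚ) * df := by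
    rw [hg1, hg2]
    field_simp
    ring
  rw [hgeq, hf (g t) hTfgt k]
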